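/- Suppose (η₁, θ₁, φ₁) and (η₂, θ₂, φ₂) are two C² solutions of the geodesic system on an interval [0, L], with η₁(t), η₂(t) ∈ (0, π/2) for all t ∈ [0, L], satisfying η₁(0) = η₂(0), η₁'(0) = η₂'(0), θ₁'(0) = θ₂'(0), and φ₁'(0) = φ₂'(0) (but with possibly different initial values θ₁(0) ≠ θ₂(0) and φ₁(0) ≠ φ₂(0)). Then for all t ∈ [0, L]: η₁(t) = η₂(t), η₁'(t) = η₂'(t), θ₁'(t) = θ₂'(t), and φ₁'(t) = φ₂'(t). (That is, the quadruple (η, η', θ', φ') satisfies a first-order system that decouples from θ and φ, so its evolution is independent of the initial values of θ and φ; this is the key step showing the sectional curvatures are constant along the tubular neighbourhood of the curve (η₀, αt, βt) in the degenerate 3-ellipsoid.) -/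

import Mathlib

open Real


noncomputable def ellF (a b : ℝ) : ℝ × ℝ × ℝ × ℝ → ℝ × ℝ × ℝ × ℝ :=
  fun x => (x.2.1,
    -((b ^ 2 - a ^ 2) * Real.sin x.1 * Real.cos x.1 /
        (a ^ 2 * Real.cos x.1 ^ 2 + b ^ 2 * Real.sin x.1 ^ 2) * x.2.1 ^ 2
      - a ^ 2 * Real.sin x.1 * Real.cos x.1 /
        (a ^ 2 * Real.cos x.1 ^ 2 + b ^ 2 * Real.sin x.1 ^ 2) * x.2.2.1 ^ 2
      + b ^ 2 * Real.sin x.1 * Real.cos x.1 /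
        (a ^ 2 * Real.cos x.1 ^ 2 + b ^ 2 * Real.sin x.1 ^ 2) * x.2.2.2 ^ 2),
    -(2 * (Real.cos x.1 / Real.sin x.1) * x.2.1 * x.2.2.1),
    2 * (Real.sin x.1 / Real.cos x.1) * x.2.1 * x.2.2.2)

lemma ellE_pos (a b η : ℝ) (ha : 0 < a) (hb : 0 < b) :
    0 < a ^ 2 * Real.cos η ^ 2 + b ^ 2 * Real.sin η ^ 2 := by
  rcases eq_or_ne (Real.cos η) 0 with h | h
  · have h1 : Real.sin η ^ 2 = 1 := by nlinarith [Real.sin_sq_add_cos_sq η]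
    rw [h, h1]; nlinarith [pow_pos hb 2]
  · have h2 : 0 < Real.cos η ^ 2 := by rw [← sq_abs]; exact pow_pos (abs_pos.mpr h) 2
    nlinarith [pow_pos ha 2, mul_nonneg (pow_pos hb 2).le (sq_nonneg (Real.sin η))]

lemma ellF_contDiffOn (a b : ℝ) (ha : 0 < a) (hb : 0 < b) :
    ContDiffOn ℝ 1 (ellF a b) {x : ℝ × ℝ × ℝ × ℝ | x.1 ∈ Set.Ioo 0 (Real.pi / 2)} := by
  intro x hx
  apply ContDiffAt.contDiffWithinAt
  have hx' : x.1 ∈ Set.Ioo 0 (Real.pi / 2) := hx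
  have hsin : Real.sin x.1 ≠ 0 := ne_of_gt (Real.sin_pos_of_pos_of_lt_pi hx'.1
    (hx'.2.trans_le (by linarith [Real.pi_pos])))
  have hcos : Real.cos x.1 ≠ 0 := ne_of_gt (Real.cos_pos_of_mem_Ioo
    ⟨by linarith [hx'.1, Real.pi_pos], hx'.2⟩)
  have hEne : (a ^ 2 * Real.cos x.1 ^ 2 + b ^ 2 * Real.sin x.1 ^ 2) ≠ 0 :=
    ne_of_gt (ellE_pos a b x.1 ha hb)
  have cfst : ContDiff ℝ 1 (fun x : ℝ × ℝ × ℝ × ℝ => x.1) := contDiff_fst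
  have cS : ContDiff ℝ 1 (fun x : ℝ × ℝ × ℝ × ℝ => Real.sin x.1) := cfst.sin
  have cC : ContDiff ℝ 1 (fun x : ℝ × ℝ × ℝ × ℝ => Real.cos x.1) := cfst.cos
  have cp : ContDiff ℝ 1 (fun x : ℝ × ℝ × ℝ × ℝ => x.2.1) := contDiff_snd.fst
  have cq : ContDiff ℝ 1 (fun x : ℝ × ℝ × ℝ × ℝ => x.2.2.1) := contDiff_snd.snd.fst
  have cr : ContDiff ℝ 1 (fun x : ℝ × ℝ × ℝ × ℝ => x.2.2.2) := contDiff_snd.snd.snd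
  have cE : ContDiff ℝ 1
      (fun x : ℝ × ℝ × ℝ × ℝ => a ^ 2 * Real.cos x.1 ^ 2 + b ^ 2 * Real.sin x.1 ^ 2) :=
    (contDiff_const.mul (cC.pow 2)).add (contDiff_const.mul (cS.pow 2))
  have d1 : ContDiffAt ℝ 1 (fun x : ℝ × ℝ × ℝ × ℝ =>
      (b ^ 2 - a ^ 2) * Real.sin x.1 * Real.cos x.1 /
        (a ^ 2 * Real.cos x.1 ^ 2 + b ^ 2 * Real.sin x.1 ^ 2)) x :=
    ((contDiff_const.mul cS).mul cC).contDiffAt.div cE.contDiffAt hEne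
  have d2 : ContDiffAt ℝ 1 (fun x : ℝ × ℝ × ℝ × ℝ =>
      a ^ 2 * Real.sin x.1 * Real.cos x.1 /
        (a ^ 2 * Real.cos x.1 ^ 2 + b ^ 2 * Real.sin x.1 ^ 2)) x :=
    ((contDiff_const.mul cS).mul cC).contDiffAt.div cE.contDiffAt hEne
  have d3 : ContDiffAt ℝ 1 (fun x : ℝ × ℝ × ℝ × ℝ =>
      b ^ 2 * Real.sin x.1 * Real.cos x.1 /
        (a ^ 2 * Real.cos x.1 ^ 2 + b ^ 2 * Real.sin x.1 ^ 2)) x :=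
    ((contDiff_const.mul cS).mul cC).contDiffAt.div cE.contDiffAt hEne
  exact cp.contDiffAt.prodMk
    ((((d1.mul (cp.pow 2).contDiffAt).sub (d2.mul (cq.pow 2).contDiffAt)).add
      (d3.mul (cr.pow 2).contDiffAt)).neg.prodMk
      (((((contDiffAt_const.mul (cC.contDiffAt.div cS.contDiffAt hsin)).mul
        cp.contDiffAt).mul cq.contDiffAt).neg).prodMk
      (((contDiffAt_const.mul (cS.contDiffAt.div cC.contDiffAt hcos)).mul
        cp.contDiffAt).mul cr.contDiffAt)))

lemma ellF_exists_lipschitzOnWith (a b : ℝ) (ha : 0 < a) (hb : 0 < b)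
    {s : Set (ℝ × ℝ × ℝ × ℝ)} (hs : IsCompact s) (hconv : Convex ℝ s)
    (hsub : s ⊆ {x : ℝ × ℝ × ℝ × ℝ | x.1 ∈ Set.Ioo 0 (Real.pi / 2)}) :
    ∃ K : NNReal, LipschitzOnWith K (ellF a b) s := by
  have hopen : IsOpen {x : ℝ × ℝ × ℝ × ℝ | x.1 ∈ Set.Ioo 0 (Real.pi / 2)} :=
    isOpen_Ioo.preimage continuous_fst
  have hcd := ellF_contDiffOn a b ha hb
  have hder : ContinuousOn (fderiv ℝ (ellF a b)) _ :=
    hcd.continuousOn_fderiv_of_isOpen hopen le_rfl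
  obtain ⟨C, hC⟩ := hs.exists_bound_of_continuousOn ((hder.mono hsub).norm)
  refine ⟨Real.toNNReal C, hconv.lipschitzOnWith_of_nnnorm_hasFDerivWithin_le
    (f' := fun x => fderiv ℝ (ellF a b) x) (fun x hx =>
      (((hcd.contDiffAt (hopen.mem_nhds (hsub hx))).differentiableAt
        one_ne_zero).hasFDerivAt).hasFDerivWithinAt) (fun x hx => ?_)⟩
  have := (hC x hx).trans (Real.le_coe_toNNReal C)
  simpa [← NNReal.coe_le_coe, coe_nnnorm] using this

/-- Uniqueness/decoupling for the geodesic system of the metric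
`diag(a² cos²η + b² sin²η, a² sin²η, b² cos²η)` on the degenerate 3-ellipsoid: two C²
geodesics `(η₁,θ₁,φ₁)` and `(η₂,θ₂,φ₂)` on `[0,L]` with `ηᵢ(t) ∈ (0,π/2)`, with the same
initial values of `η, η', θ', φ'` (but possibly different initial values of `θ` and `φ`),
have the same `η, η', θ', φ'` for all `t ∈ [0,L]`: the quadruple `(η, η', θ', φ')`
satisfies a first-order system that decouples from `θ` and `φ`. -/
theorem ellipsoid_geodesic_system_decouples
    (a b L : ℝ) (ha : 0 < a) (hb : 0 < b) (hL : 0 ≤ L)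
    (E : ℝ → ℝ) (hE : ∀ η, E η = a ^ 2 * Real.cos η ^ 2 + b ^ 2 * Real.sin η ^ 2)
    (η₁ θ₁ φ₁ η₂ θ₂ φ₂ dη₁ dθ₁ dφ₁ dη₂ dθ₂ dφ₂ : ℝ → ℝ)
    (hrange₁ : ∀ t ∈ Set.Icc 0 L, η₁ t ∈ Set.Ioo 0 (Real.pi / 2))
    (hrange₂ : ∀ t ∈ Set.Icc 0 L, η₂ t ∈ Set.Ioo 0 (Real.pi / 2))
    (hd₁η : ∀ t ∈ Set.Icc 0 L, HasDerivAt η₁ (dη₁ t) t)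
    (hd₁θ : ∀ t ∈ Set.Icc 0 L, HasDerivAt θ₁ (dθ₁ t) t)
    (hd₁φ : ∀ t ∈ Set.Icc 0 L, HasDerivAt φ₁ (dφ₁ t) t)
    (hd₂η : ∀ t ∈ Set.Icc 0 L, HasDerivAt η₂ (dη₂ t) t)
    (hd₂θ : ∀ t ∈ Set.Icc 0 L, HasDerivAt θ₂ (dθ₂ t) t)
    (hd₂φ : ∀ t ∈ Set.Icc 0 L, HasDerivAt φ₂ (dφ₂ t) t)
    (hode₁η : ∀ t ∈ Set.Icc 0 L, HasDerivAt dη₁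
      (-((b ^ 2 - a ^ 2) * Real.sin (η₁ t) * Real.cos (η₁ t) / E (η₁ t) * (dη₁ t) ^ 2
        - a ^ 2 * Real.sin (η₁ t) * Real.cos (η₁ t) / E (η₁ t) * (dθ₁ t) ^ 2
        + b ^ 2 * Real.sin (η₁ t) * Real.cos (η₁ t) / E (η₁ t) * (dφ₁ t) ^ 2)) t)
    (hode₁θ : ∀ t ∈ Set.Icc 0 L, HasDerivAt dθ₁
      (-(2 * (Real.cos (η₁ t) / Real.sin (η₁ t)) * dη₁ t * dθ₁ t)) t)
    (hode₁φ : ∀ t ∈ Set.Icc 0 L, HasDerivAt dφ₁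
      (2 * (Real.sin (η₁ t) / Real.cos (η₁ t)) * dη₁ t * dφ₁ t) t)
    (hode₂η : ∀ t ∈ Set.Icc 0 L, HasDerivAt dη₂
      (-((b ^ 2 - a ^ 2) * Real.sin (η₂ t) * Real.cos (η₂ t) / E (η₂ t) * (dη₂ t) ^ 2
        - a ^ 2 * Real.sin (η₂ t) * Real.cos (η₂ t) / E (η₂ t) * (dθ₂ t) ^ 2
        + b ^ 2 * Real.sin (η₂ t) * Real.cos (η₂ t) / E (η₂ t) * (dφ₂ t) ^ 2)) t)
    (hode₂θ : ∀ t ∈ Set.Icc 0 L, HasDerivAt dθ₂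
      (-(2 * (Real.cos (η₂ t) / Real.sin (η₂ t)) * dη₂ t * dθ₂ t)) t)
    (hode₂φ : ∀ t ∈ Set.Icc 0 L, HasDerivAt dφ₂
      (2 * (Real.sin (η₂ t) / Real.cos (η₂ t)) * dη₂ t * dφ₂ t) t)
    (h0η : η₁ 0 = η₂ 0) (h0dη : dη₁ 0 = dη₂ 0) (h0dθ : dθ₁ 0 = dθ₂ 0) (h0dφ : dφ₁ 0 = dφ₂ 0) :
    ∀ t ∈ Set.Icc 0 L,
      η₁ t = η₂ t ∧ dη₁ t = dη₂ t ∧ dθ₁ t = dθ₂ t ∧ dφ₁ t = dφ₂ t := by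
  have h0mem : (0 : ℝ) ∈ Set.Icc (0 : ℝ) L := by simp [hL]
  set u₁ : ℝ → ℝ × ℝ × ℝ × ℝ := fun t => (η₁ t, dη₁ t, dθ₁ t, dφ₁ t) with hu₁def
  set u₂ : ℝ → ℝ × ℝ × ℝ × ℝ := fun t => (η₂ t, dη₂ t, dθ₂ t, dφ₂ t) with hu₂def
  have hu₁' : ∀ t ∈ Set.Icc (0:ℝ) L, HasDerivAt u₁ (ellF a b (u₁ t)) t := by
    intro t ht
    have h2 := hode₁η t ht
    rw [hE] at h2
    exact (hd₁η t ht).prodMk (h2.prodMk ((hode₁θ t ht).prodMk (hode₁φ t ht)))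
  have hu₂' : ∀ t ∈ Set.Icc (0:ℝ) L, HasDerivAt u₂ (ellF a b (u₂ t)) t := by
    intro t ht
    have h2 := hode₂η t ht
    rw [hE] at h2
    exact (hd₂η t ht).prodMk (h2.prodMk ((hode₂θ t ht).prodMk (hode₂φ t ht)))
  have hu₁c : ContinuousOn u₁ (Set.Icc 0 L) :=
    fun t ht => (hu₁' t ht).continuousAt.continuousWithinAt
  have hu₂c : ContinuousOn u₂ (Set.Icc 0 L) :=
    fun t ht => (hu₂' t ht).continuousAt.continuousWithinAt
  have hη₁c : ContinuousOn η₁ (Set.Icc 0 L) :=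
    fun t ht => (hd₁η t ht).continuousAt.continuousWithinAt
  have hη₂c : ContinuousOn η₂ (Set.Icc 0 L) :=
    fun t ht => (hd₂η t ht).continuousAt.continuousWithinAt
  have hne : (Set.Icc (0:ℝ) L).Nonempty := ⟨0, h0mem⟩
  obtain ⟨t₁, ht₁, hmin₁⟩ := isCompact_Icc.exists_isMinOn hne hη₁c
  obtain ⟨t₂, ht₂, hmin₂⟩ := isCompact_Icc.exists_isMinOn hne hη₂c
  obtain ⟨t₃, ht₃, hmax₁⟩ := isCompact_Icc.exists_isMaxOn hne hη₁c
  obtain ⟨t₄, ht₄, hmax₂⟩ := isCompact_Icc.exists_isMaxOn hne hη₂c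
  obtain ⟨C₁, hC₁⟩ := isCompact_Icc.exists_bound_of_continuousOn hu₁c
  obtain ⟨C₂, hC₂⟩ := isCompact_Icc.exists_bound_of_continuousOn hu₂c
  set lo : ℝ := min (η₁ t₁) (η₂ t₂) with hlo
  set hi : ℝ := max (η₁ t₃) (η₂ t₄) with hhi
  set M : ℝ := max C₁ C₂ with hM
  have hlopos : 0 < lo := lt_min (hrange₁ t₁ ht₁).1 (hrange₂ t₂ ht₂).1
  have hhilt : hi < Real.pi / 2 := max_lt (hrange₁ t₃ ht₃).2 (hrange₂ t₄ ht₄).2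
  set sset : Set (ℝ × ℝ × ℝ × ℝ) :=
    Set.Icc lo hi ×ˢ Set.Icc (-M) M ×ˢ Set.Icc (-M) M ×ˢ Set.Icc (-M) M with hsset
  have hscompact : IsCompact sset :=
    isCompact_Icc.prod (isCompact_Icc.prod (isCompact_Icc.prod isCompact_Icc))
  have hsconv : Convex ℝ sset :=
    (convex_Icc _ _).prod ((convex_Icc _ _).prod ((convex_Icc _ _).prod (convex_Icc _ _)))
  have hssub : sset ⊆ {x : ℝ × ℝ × ℝ × ℝ | x.1 ∈ Set.Ioo 0 (Real.pi / 2)} := by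
    intro x hx
    exact ⟨hlopos.trans_le hx.1.1, hx.1.2.trans_lt hhilt⟩
  -- membership of trajectories
  have habs : ∀ (x : ℝ × ℝ × ℝ × ℝ),
      |x.2.1| ≤ ‖x‖ ∧ |x.2.2.1| ≤ ‖x‖ ∧ |x.2.2.2| ≤ ‖x‖ := by
    intro x
    refine ⟨?_, ?_, ?_⟩
    · exact le_trans (le_trans (le_of_eq (Real.norm_eq_abs _).symm) (norm_fst_le x.2))
        (norm_snd_le x)
    · exact le_trans (le_trans (le_trans (le_of_eq (Real.norm_eq_abs _).symm)
        (norm_fst_le x.2.2)) (norm_snd_le x.2)) (norm_snd_le x)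
    · exact le_trans (le_trans (le_trans (le_of_eq (Real.norm_eq_abs _).symm)
        (norm_snd_le x.2.2)) (norm_snd_le x.2)) (norm_snd_le x)
  have hmem₁ : ∀ t ∈ Set.Icc (0:ℝ) L, u₁ t ∈ sset := by
    intro t ht
    have hb1 : ‖u₁ t‖ ≤ M := (hC₁ t ht).trans (le_max_left _ _)
    obtain ⟨h1, h2, h3⟩ := habs (u₁ t)
    refine ⟨⟨(min_le_left _ _).trans (hmin₁ ht), (hmax₁ ht).trans (le_max_left _ _)⟩,
      ?_, ?_, ?_⟩ <;> exact abs_le.mp (by solve_by_elim [le_trans])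
  have hmem₂ : ∀ t ∈ Set.Icc (0:ℝ) L, u₂ t ∈ sset := by
    intro t ht
    have hb1 : ‖u₂ t‖ ≤ M := (hC₂ t ht).trans (le_max_right _ _)
    obtain ⟨h1, h2, h3⟩ := habs (u₂ t)
    refine ⟨⟨(min_le_right _ _).trans (hmin₂ ht), (hmax₂ ht).trans (le_max_right _ _)⟩,
      ?_, ?_, ?_⟩ <;> exact abs_le.mp (by solve_by_elim [le_trans])
  obtain ⟨K, hK⟩ := ellF_exists_lipschitzOnWith a b ha hb hscompact hsconv hssub
  have heq : Set.EqOn u₁ u₂ (Set.Icc 0 L) := by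
    apply ODE_solution_unique_of_mem_Icc_right
      (v := fun _ x => ellF a b x) (s := fun _ => sset) (K := K)
      (fun _ _ => hK) hu₁c
      (fun t ht => (hu₁' t (Set.Ico_subset_Icc_self ht)).hasDerivWithinAt)
      (fun t ht => hmem₁ t (Set.Ico_subset_Icc_self ht)) hu₂c
      (fun t ht => (hu₂' t (Set.Ico_subset_Icc_self ht)).hasDerivWithinAt)
      (fun t ht => hmem₂ t (Set.Ico_subset_Icc_self ht))
    simp only [hu₁def, hu₂def, h0η, h0dη, h0dθ, h0dφ]
  intro t ht
  have := heq ht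
  simpa [hu₁def, hu₂def, Prod.ext_iff] using this
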